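/- For every natural number n, no complex root of the degree-22 monic integer polynomial μ_n is a root of unity; equivalently, μ_n is not divisible by any cyclotomic polynomial. -/
import Mathlib


open Polynomial in
/-- The degree-11 integer polynomial `g n` from the paper. -/
noncomputable def g (n : ℕ) : Polynomial ℤ :=
  X ^ 11
    + C (-16 * (n : ℤ) ^ 3 - 92 * n ^ 2 - 150 * n - 69) * X ^ 10
    + C (-24 * (n : ℤ) ^ 3 - 120 * n ^ 2 - 182 * n - 91) * X ^ 9
    + C (148 * (n : ℤ) ^ 3 + 849 * n ^ 2 + 1426 * n + 670) * X ^ 8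
    + C (206 * (n : ℤ) ^ 3 + 1014 * n ^ 2 + 1600 * n + 770) * X ^ 7
    + C (-466 * (n : ℤ) ^ 3 - 2689 * n ^ 2 - 4681 * n - 2253) * X ^ 6
    + C (-568 * (n : ℤ) ^ 3 - 2749 * n ^ 2 - 4587 * n - 2245) * X ^ 5
    + C (578 * (n : ℤ) ^ 3 + 3415 * n ^ 2 + 6196 * n + 3062) * X ^ 4
    + C (534 * (n : ℤ) ^ 3 + 2526 * n ^ 2 + 4605 * n + 2359) * X ^ 3
    + C (-232 * (n : ℤ) ^ 3 - 1474 * n ^ 2 - 2854 * n - 1464) * X ^ 2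
    + C (-88 * (n : ℤ) ^ 3 - 392 * n ^ 2 - 976 * n - 574) * X
    + C (8 * (n : ℤ) ^ 2 + 88 * n + 67)

set_option maxRecDepth 40000

open Polynomial in
noncomputable def M (n : ℕ) : Polynomial ℤ :=
  X ^ 22
    + C (-16 * (n : ℤ) ^ 3 - 92 * n ^ 2 - 150 * n - 69) * X ^ 21
    + C (-24 * (n : ℤ) ^ 3 - 120 * n ^ 2 - 182 * n - 80) * X ^ 20
    + C (-12 * (n : ℤ) ^ 3 - 71 * n ^ 2 - 74 * n - 20) * X ^ 19
    + C (-10 * (n : ℤ) ^ 3 - 66 * n ^ 2 - 38 * n + 6) * X ^ 18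
    + C (-2 * (n : ℤ) ^ 3 - 37 * n ^ 2 - 23 * n + 2) * X ^ 17
    + C (10 * (n : ℤ) ^ 3 + 29 * n ^ 2 + 61 * n + 34) * X ^ 16
    + C (6 * (n : ℤ) ^ 3 + 13 * n ^ 2 + 38 * n + 24) * X ^ 15
    + C (4 * (n : ℤ) ^ 3 - 5 * n ^ 2 - 18 * n - 10) * X ^ 14
    + C (18 * (n : ℤ) ^ 3 + 75 * n ^ 2 + 71 * n + 19) * X ^ 13
    + C (20 * (n : ℤ) ^ 3 + 66 * n ^ 2 + 37 * n - 1) * X ^ 12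
    + C (12 * (n : ℤ) ^ 3 + 16 * n ^ 2 - 44 * n - 37) * X ^ 11
    + C (20 * (n : ℤ) ^ 3 + 66 * n ^ 2 + 37 * n - 1) * X ^ 10
    + C (18 * (n : ℤ) ^ 3 + 75 * n ^ 2 + 71 * n + 19) * X ^ 9
    + C (4 * (n : ℤ) ^ 3 - 5 * n ^ 2 - 18 * n - 10) * X ^ 8
    + C (6 * (n : ℤ) ^ 3 + 13 * n ^ 2 + 38 * n + 24) * X ^ 7
    + C (10 * (n : ℤ) ^ 3 + 29 * n ^ 2 + 61 * n + 34) * X ^ 6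
    + C (-2 * (n : ℤ) ^ 3 - 37 * n ^ 2 - 23 * n + 2) * X ^ 5
    + C (-10 * (n : ℤ) ^ 3 - 66 * n ^ 2 - 38 * n + 6) * X ^ 4
    + C (-12 * (n : ℤ) ^ 3 - 71 * n ^ 2 - 74 * n - 20) * X ^ 3
    + C (-24 * (n : ℤ) ^ 3 - 120 * n ^ 2 - 182 * n - 80) * X ^ 2
    + C (-16 * (n : ℤ) ^ 3 - 92 * n ^ 2 - 150 * n - 69) * X
    + C ((1 : ℤ))

open Polynomial in
lemma M_eq_sum (n : ℕ) : M n =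
      (X ^ 2 + 1) ^ 11
      + C (-16 * (n : ℤ) ^ 3 - 92 * n ^ 2 - 150 * n - 69) * X * (X ^ 2 + 1) ^ 10
      + C (-24 * (n : ℤ) ^ 3 - 120 * n ^ 2 - 182 * n - 91) * X ^ 2 * (X ^ 2 + 1) ^ 9
      + C (148 * (n : ℤ) ^ 3 + 849 * n ^ 2 + 1426 * n + 670) * X ^ 3 * (X ^ 2 + 1) ^ 8
      + C (206 * (n : ℤ) ^ 3 + 1014 * n ^ 2 + 1600 * n + 770) * X ^ 4 * (X ^ 2 + 1) ^ 7
      + C (-466 * (n : ℤ) ^ 3 - 2689 * n ^ 2 - 4681 * n - 2253) * X ^ 5 * (X ^ 2 + 1) ^ 6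
      + C (-568 * (n : ℤ) ^ 3 - 2749 * n ^ 2 - 4587 * n - 2245) * X ^ 6 * (X ^ 2 + 1) ^ 5
      + C (578 * (n : ℤ) ^ 3 + 3415 * n ^ 2 + 6196 * n + 3062) * X ^ 7 * (X ^ 2 + 1) ^ 4
      + C (534 * (n : ℤ) ^ 3 + 2526 * n ^ 2 + 4605 * n + 2359) * X ^ 8 * (X ^ 2 + 1) ^ 3
      + C (-232 * (n : ℤ) ^ 3 - 1474 * n ^ 2 - 2854 * n - 1464) * X ^ 9 * (X ^ 2 + 1) ^ 2
      + C (-88 * (n : ℤ) ^ 3 - 392 * n ^ 2 - 976 * n - 574) * X ^ 10 * (X ^ 2 + 1)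
      + C (8 * (n : ℤ) ^ 2 + 88 * n + 67) * X ^ 11 := by
  simp only [M, map_add, map_mul, map_pow, map_neg, map_sub, map_ofNat, map_one, Polynomial.C_1]
  ring

open Polynomial in
set_option maxHeartbeats 1000000 in
lemma M_fun_eq (n : ℕ) : ∀ z : ℂ, z ≠ 0 →
    Polynomial.aeval z (M n) = z ^ 11 * Polynomial.aeval (z + z⁻¹) (g n) := by
  intro z hz
  have e : z * (z + z⁻¹) = z ^ 2 + 1 := by
    rw [mul_add, mul_inv_cancel₀ hz]; ring
  rw [M_eq_sum]
  simp only [g, map_add, map_mul, map_pow, aeval_X, aeval_C, map_one]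
  rw [← e]
  ring

open Polynomial in
lemma mu_eq_M (n : ℕ) (μ : Polynomial ℤ)
    (hμ : ∀ z : ℂ, z ≠ 0 →
      Polynomial.aeval z μ = z ^ 11 * Polynomial.aeval (z + z⁻¹) (g n)) : μ = M n := by
  have h : μ - M n = 0 := by
    have hz : (Polynomial.map (Int.castRingHom ℂ) (μ - M n)) = 0 := by
      apply Polynomial.eq_zero_of_infinite_isRoot
      apply Set.Infinite.mono (s := {z : ℂ | z ≠ 0})
      · intro z hz
        simp only [Set.mem_setOf_eq, IsRoot.def] at hz ⊢
        have : Polynomial.eval z (Polynomial.map (Int.castRingHom ℂ) (μ - M n))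
            = Polynomial.aeval z μ - Polynomial.aeval z (M n) := by
          simp [Polynomial.eval_map, Polynomial.aeval_def, Polynomial.eval₂_sub]
        rw [this, hμ z hz, M_fun_eq n z hz, sub_self]
      · have : {z : ℂ | z ≠ 0} = {(0:ℂ)}ᶜ := by ext; simp
        rw [this]
        exact (Set.finite_singleton (0:ℂ)).infinite_compl
    have hinj : Function.Injective (Polynomial.map (Int.castRingHom ℂ)) :=
      Polynomial.map_injective _ Int.cast_injective
    exact hinj (by rw [hz, Polynomial.map_zero])
  exact sub_eq_zero.mp h

set_option maxHeartbeats 1000000 in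
lemma M_aeval {R : Type*} [CommRing R] (n : ℕ) (x : R) :
    Polynomial.aeval x (M n) =
      x ^ 22
      + (-16 * (n : R) ^ 3 - 92 * (n : R) ^ 2 - 150 * (n : R) - 69) * x ^ 21
      + (-24 * (n : R) ^ 3 - 120 * (n : R) ^ 2 - 182 * (n : R) - 80) * x ^ 20
      + (-12 * (n : R) ^ 3 - 71 * (n : R) ^ 2 - 74 * (n : R) - 20) * x ^ 19
      + (-10 * (n : R) ^ 3 - 66 * (n : R) ^ 2 - 38 * (n : R) + 6) * x ^ 18
      + (-2 * (n : R) ^ 3 - 37 * (n : R) ^ 2 - 23 * (n : R) + 2) * x ^ 17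
      + (10 * (n : R) ^ 3 + 29 * (n : R) ^ 2 + 61 * (n : R) + 34) * x ^ 16
      + (6 * (n : R) ^ 3 + 13 * (n : R) ^ 2 + 38 * (n : R) + 24) * x ^ 15
      + (4 * (n : R) ^ 3 - 5 * (n : R) ^ 2 - 18 * (n : R) - 10) * x ^ 14
      + (18 * (n : R) ^ 3 + 75 * (n : R) ^ 2 + 71 * (n : R) + 19) * x ^ 13
      + (20 * (n : R) ^ 3 + 66 * (n : R) ^ 2 + 37 * (n : R) - 1) * x ^ 12
      + (12 * (n : R) ^ 3 + 16 * (n : R) ^ 2 - 44 * (n : R) - 37) * x ^ 11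
      + (20 * (n : R) ^ 3 + 66 * (n : R) ^ 2 + 37 * (n : R) - 1) * x ^ 10
      + (18 * (n : R) ^ 3 + 75 * (n : R) ^ 2 + 71 * (n : R) + 19) * x ^ 9
      + (4 * (n : R) ^ 3 - 5 * (n : R) ^ 2 - 18 * (n : R) - 10) * x ^ 8
      + (6 * (n : R) ^ 3 + 13 * (n : R) ^ 2 + 38 * (n : R) + 24) * x ^ 7
      + (10 * (n : R) ^ 3 + 29 * (n : R) ^ 2 + 61 * (n : R) + 34) * x ^ 6
      + (-2 * (n : R) ^ 3 - 37 * (n : R) ^ 2 - 23 * (n : R) + 2) * x ^ 5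
      + (-10 * (n : R) ^ 3 - 66 * (n : R) ^ 2 - 38 * (n : R) + 6) * x ^ 4
      + (-12 * (n : R) ^ 3 - 71 * (n : R) ^ 2 - 74 * (n : R) - 20) * x ^ 3
      + (-24 * (n : R) ^ 3 - 120 * (n : R) ^ 2 - 182 * (n : R) - 80) * x ^ 2
      + (-16 * (n : R) ^ 3 - 92 * (n : R) ^ 2 - 150 * (n : R) - 69) * x
      + (1) := by
  simp only [M, map_add, map_mul, map_pow, map_sub, map_neg, map_natCast, map_ofNat, map_one,
    Polynomial.aeval_X, Polynomial.aeval_C, algebraMap_int_eq, eq_intCast]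
  all_goals push_cast
  all_goals ring

lemma prim_helper {p : ℕ} [NeZero p] (t : ZMod p) (m : ℕ) (hm : 0 < m) (h1 : t ^ m = 1)
    (h2 : ∀ d, d < m → d ∣ m → t ^ d ≠ 1) : IsPrimitiveRoot t m := by
  have ho : orderOf t ∣ m := orderOf_dvd_of_pow_eq_one h1
  have heq : orderOf t = m := by
    rcases lt_or_eq_of_le (Nat.le_of_dvd hm ho) with h | h
    · exact absurd (pow_orderOf_eq_one t) (h2 _ h ho)
    · exact h
  exact heq ▸ IsPrimitiveRoot.orderOf t

open Polynomial in
lemma case_gen (m p : ℕ) [hp : Fact (Nat.Prime p)] (t : ZMod p)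
    (hm : 0 < m) (hm0 : ((m : ℕ) : ZMod p) ≠ 0)
    (h1 : t ^ m = 1) (h2 : ∀ d, d < m → d ∣ m → t ^ d ≠ 1)
    (n : ℕ) (h : cyclotomic m ℤ ∣ M n) :
    Polynomial.aeval t (M n) = 0 := by
  haveI : NeZero p := ⟨hp.out.ne_zero⟩
  have hmap : cyclotomic m (ZMod p) ∣ (M n).map (Int.castRingHom (ZMod p)) := by
    rw [← map_cyclotomic_int m (ZMod p)]
    exact Polynomial.map_dvd _ h
  haveI : NeZero ((m : ℕ) : ZMod p) := ⟨hm0⟩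
  have hprim : IsPrimitiveRoot t m := prim_helper _ _ hm h1 h2
  have h0 : Polynomial.eval t ((M n).map (Int.castRingHom (ZMod p))) = 0 :=
    Polynomial.eval_eq_zero_of_dvd_of_eval_eq_zero hmap
      (Polynomial.isRoot_cyclotomic_iff.mpr hprim)
  rw [Polynomial.aeval_def, ← Polynomial.eval_map, algebraMap_int_eq]
  exact h0

instance : Fact (Nat.Prime 11) := ⟨by norm_num⟩
instance : Fact (Nat.Prime 17) := ⟨by norm_num⟩
instance : Fact (Nat.Prime 19) := ⟨by norm_num⟩
instance : Fact (Nat.Prime 23) := ⟨by norm_num⟩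
instance : Fact (Nat.Prime 29) := ⟨by norm_num⟩
instance : Fact (Nat.Prime 31) := ⟨by norm_num⟩
instance : Fact (Nat.Prime 37) := ⟨by norm_num⟩
instance : Fact (Nat.Prime 41) := ⟨by norm_num⟩
instance : Fact (Nat.Prime 43) := ⟨by norm_num⟩
instance : Fact (Nat.Prime 47) := ⟨by norm_num⟩
instance : Fact (Nat.Prime 53) := ⟨by norm_num⟩
instance : Fact (Nat.Prime 61) := ⟨by norm_num⟩
instance : Fact (Nat.Prime 67) := ⟨by norm_num⟩
instance : Fact (Nat.Prime 73) := ⟨by norm_num⟩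
instance : Fact (Nat.Prime 89) := ⟨by norm_num⟩
instance : Fact (Nat.Prime 97) := ⟨by norm_num⟩
instance : Fact (Nat.Prime 101) := ⟨by norm_num⟩
instance : Fact (Nat.Prime 103) := ⟨by norm_num⟩
instance : Fact (Nat.Prime 109) := ⟨by norm_num⟩
instance : Fact (Nat.Prime 191) := ⟨by norm_num⟩

open Polynomial in
lemma M_eval_one (n : ℕ) : Polynomial.eval (1 : ℤ) (M n) = -(400 * (n:ℤ)^2 + 600 * n + 225) := by
  simp only [M, eval_add, eval_mul, eval_pow, eval_X, eval_C, eval_one]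
  ring

open Polynomial in
lemma M_eval_neg_one (n : ℕ) : Polynomial.eval (-1 : ℤ) (M n) = 16 * (n:ℤ)^2 + 40 * n + 25 := by
  simp only [M, eval_add, eval_mul, eval_pow, eval_X, eval_C, eval_one]
  ring

open Polynomial in
lemma case_1 (n : ℕ) (h : cyclotomic 1 ℤ ∣ M n) : False := by
  rw [cyclotomic_one] at h
  have h0 : Polynomial.eval (1:ℤ) (M n) = 0 :=
    Polynomial.eval_eq_zero_of_dvd_of_eval_eq_zero h (by simp)
  rw [M_eval_one] at h0
  have hn : (0:ℤ) ≤ (n:ℤ) := Int.natCast_nonneg n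
  nlinarith [sq_nonneg ((n:ℤ))]

open Polynomial in
lemma case_2 (n : ℕ) (h : cyclotomic 2 ℤ ∣ M n) : False := by
  rw [cyclotomic_two] at h
  have h0 : Polynomial.eval (-1:ℤ) (M n) = 0 :=
    Polynomial.eval_eq_zero_of_dvd_of_eval_eq_zero h (by simp)
  rw [M_eval_neg_one] at h0
  have hn : (0:ℤ) ≤ (n:ℤ) := Int.natCast_nonneg n
  nlinarith [sq_nonneg ((n:ℤ))]

open Polynomial in
lemma case_3 (n : ℕ) (h : cyclotomic 3 ℤ ∣ M n) : False := by
  have e1 : ((3 : ℕ) : ZMod 19) ≠ 0 := by decide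
  have e2 : (7 : ZMod 19) ^ 3 = 1 := by decide
  have e3 : ∀ d, d < 3 → d ∣ 3 → (7 : ZMod 19) ^ d ≠ 1 := by decide
  have h0 := case_gen 3 19 (7 : ZMod 19) (by norm_num) e1 e2 e3 n h
  rw [M_aeval] at h0
  revert h0
  generalize (n : ZMod 19) = c
  revert c
  decide

open Polynomial in
lemma case_4 (n : ℕ) (h : cyclotomic 4 ℤ ∣ M n) : False := by
  have e1 : ((4 : ℕ) : ZMod 17) ≠ 0 := by decide
  have e2 : (4 : ZMod 17) ^ 4 = 1 := by decide
  have e3 : ∀ d, d < 4 → d ∣ 4 → (4 : ZMod 17) ^ d ≠ 1 := by decide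
  have h0 := case_gen 4 17 (4 : ZMod 17) (by norm_num) e1 e2 e3 n h
  rw [M_aeval] at h0
  revert h0
  generalize (n : ZMod 17) = c
  revert c
  decide

open Polynomial in
lemma case_5 (n : ℕ) (h : cyclotomic 5 ℤ ∣ M n) : False := by
  have e1 : ((5 : ℕ) : ZMod 11) ≠ 0 := by decide
  have e2 : (5 : ZMod 11) ^ 5 = 1 := by decide
  have e3 : ∀ d, d < 5 → d ∣ 5 → (5 : ZMod 11) ^ d ≠ 1 := by decide
  have h0 := case_gen 5 11 (5 : ZMod 11) (by norm_num) e1 e2 e3 n h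
  rw [M_aeval] at h0
  revert h0
  generalize (n : ZMod 11) = c
  revert c
  decide

open Polynomial in
lemma case_6 (n : ℕ) (h : cyclotomic 6 ℤ ∣ M n) : False := by
  have e1 : ((6 : ℕ) : ZMod 19) ≠ 0 := by decide
  have e2 : (8 : ZMod 19) ^ 6 = 1 := by decide
  have e3 : ∀ d, d < 6 → d ∣ 6 → (8 : ZMod 19) ^ d ≠ 1 := by decide
  have h0 := case_gen 6 19 (8 : ZMod 19) (by norm_num) e1 e2 e3 n h
  rw [M_aeval] at h0
  revert h0
  generalize (n : ZMod 19) = c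
  revert c
  decide

open Polynomial in
lemma case_7 (n : ℕ) (h : cyclotomic 7 ℤ ∣ M n) : False := by
  have e1 : ((7 : ℕ) : ZMod 29) ≠ 0 := by decide
  have e2 : (7 : ZMod 29) ^ 7 = 1 := by decide
  have e3 : ∀ d, d < 7 → d ∣ 7 → (7 : ZMod 29) ^ d ≠ 1 := by decide
  have h0 := case_gen 7 29 (7 : ZMod 29) (by norm_num) e1 e2 e3 n h
  rw [M_aeval] at h0
  revert h0
  generalize (n : ZMod 29) = c
  revert c
  decide

open Polynomial in
lemma case_8 (n : ℕ) (h : cyclotomic 8 ℤ ∣ M n) : False := by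
  have e1 : ((8 : ℕ) : ZMod 17) ≠ 0 := by decide
  have e2 : (2 : ZMod 17) ^ 8 = 1 := by decide
  have e3 : ∀ d, d < 8 → d ∣ 8 → (2 : ZMod 17) ^ d ≠ 1 := by decide
  have h0 := case_gen 8 17 (2 : ZMod 17) (by norm_num) e1 e2 e3 n h
  rw [M_aeval] at h0
  revert h0
  generalize (n : ZMod 17) = c
  revert c
  decide

open Polynomial in
lemma case_9 (n : ℕ) (h : cyclotomic 9 ℤ ∣ M n) : False := by
  have e1 : ((9 : ℕ) : ZMod 19) ≠ 0 := by decide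
  have e2 : (4 : ZMod 19) ^ 9 = 1 := by decide
  have e3 : ∀ d, d < 9 → d ∣ 9 → (4 : ZMod 19) ^ d ≠ 1 := by decide
  have h0 := case_gen 9 19 (4 : ZMod 19) (by norm_num) e1 e2 e3 n h
  rw [M_aeval] at h0
  revert h0
  generalize (n : ZMod 19) = c
  revert c
  decide

open Polynomial in
lemma case_10 (n : ℕ) (h : cyclotomic 10 ℤ ∣ M n) : False := by
  have e1 : ((10 : ℕ) : ZMod 11) ≠ 0 := by decide
  have e2 : (2 : ZMod 11) ^ 10 = 1 := by decide
  have e3 : ∀ d, d < 10 → d ∣ 10 → (2 : ZMod 11) ^ d ≠ 1 := by decide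
  have h0 := case_gen 10 11 (2 : ZMod 11) (by norm_num) e1 e2 e3 n h
  rw [M_aeval] at h0
  revert h0
  generalize (n : ZMod 11) = c
  revert c
  decide

open Polynomial in
lemma case_11 (n : ℕ) (h : cyclotomic 11 ℤ ∣ M n) : False := by
  have e1 : ((11 : ℕ) : ZMod 23) ≠ 0 := by decide
  have e2 : (2 : ZMod 23) ^ 11 = 1 := by decide
  have e3 : ∀ d, d < 11 → d ∣ 11 → (2 : ZMod 23) ^ d ≠ 1 := by decide
  have h0 := case_gen 11 23 (2 : ZMod 23) (by norm_num) e1 e2 e3 n h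
  rw [M_aeval] at h0
  revert h0
  generalize (n : ZMod 23) = c
  revert c
  decide

open Polynomial in
lemma case_12 (n : ℕ) (h : cyclotomic 12 ℤ ∣ M n) : False := by
  have e1 : ((12 : ℕ) : ZMod 61) ≠ 0 := by decide
  have e2 : (21 : ZMod 61) ^ 12 = 1 := by decide
  have e3 : ∀ d, d < 12 → d ∣ 12 → (21 : ZMod 61) ^ d ≠ 1 := by decide
  have h0 := case_gen 12 61 (21 : ZMod 61) (by norm_num) e1 e2 e3 n h
  rw [M_aeval] at h0
  revert h0
  generalize (n : ZMod 61) = c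
  revert c
  decide

open Polynomial in
lemma case_13 (n : ℕ) (h : cyclotomic 13 ℤ ∣ M n) : False := by
  have e1 : ((13 : ℕ) : ZMod 53) ≠ 0 := by decide
  have e2 : (13 : ZMod 53) ^ 13 = 1 := by decide
  have e3 : ∀ d, d < 13 → d ∣ 13 → (13 : ZMod 53) ^ d ≠ 1 := by decide
  have h0 := case_gen 13 53 (13 : ZMod 53) (by norm_num) e1 e2 e3 n h
  rw [M_aeval] at h0
  revert h0
  generalize (n : ZMod 53) = c
  revert c
  decide

open Polynomial in
lemma case_14 (n : ℕ) (h : cyclotomic 14 ℤ ∣ M n) : False := by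
  have e1 : ((14 : ℕ) : ZMod 29) ≠ 0 := by decide
  have e2 : (9 : ZMod 29) ^ 14 = 1 := by decide
  have e3 : ∀ d, d < 14 → d ∣ 14 → (9 : ZMod 29) ^ d ≠ 1 := by decide
  have h0 := case_gen 14 29 (9 : ZMod 29) (by norm_num) e1 e2 e3 n h
  rw [M_aeval] at h0
  revert h0
  generalize (n : ZMod 29) = c
  revert c
  decide

open Polynomial in
lemma case_15 (n : ℕ) (h : cyclotomic 15 ℤ ∣ M n) : False := by
  have e1 : ((15 : ℕ) : ZMod 61) ≠ 0 := by decide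
  have e2 : (15 : ZMod 61) ^ 15 = 1 := by decide
  have e3 : ∀ d, d < 15 → d ∣ 15 → (15 : ZMod 61) ^ d ≠ 1 := by decide
  have h0 := case_gen 15 61 (15 : ZMod 61) (by norm_num) e1 e2 e3 n h
  rw [M_aeval] at h0
  revert h0
  generalize (n : ZMod 61) = c
  revert c
  decide

open Polynomial in
lemma case_16 (n : ℕ) (h : cyclotomic 16 ℤ ∣ M n) : False := by
  have e1 : ((16 : ℕ) : ZMod 17) ≠ 0 := by decide
  have e2 : (10 : ZMod 17) ^ 16 = 1 := by decide
  have e3 : ∀ d, d < 16 → d ∣ 16 → (10 : ZMod 17) ^ d ≠ 1 := by decide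
  have h0 := case_gen 16 17 (10 : ZMod 17) (by norm_num) e1 e2 e3 n h
  rw [M_aeval] at h0
  revert h0
  generalize (n : ZMod 17) = c
  revert c
  decide

open Polynomial in
lemma case_17 (n : ℕ) (h : cyclotomic 17 ℤ ∣ M n) : False := by
  have e1 : ((17 : ℕ) : ZMod 103) ≠ 0 := by decide
  have e2 : (9 : ZMod 103) ^ 17 = 1 := by decide
  have e3 : ∀ d, d < 17 → d ∣ 17 → (9 : ZMod 103) ^ d ≠ 1 := by decide
  have h0 := case_gen 17 103 (9 : ZMod 103) (by norm_num) e1 e2 e3 n h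
  rw [M_aeval] at h0
  revert h0
  generalize (n : ZMod 103) = c
  revert c
  decide

open Polynomial in
lemma case_18 (n : ℕ) (h : cyclotomic 18 ℤ ∣ M n) : False := by
  have e1 : ((18 : ℕ) : ZMod 19) ≠ 0 := by decide
  have e2 : (3 : ZMod 19) ^ 18 = 1 := by decide
  have e3 : ∀ d, d < 18 → d ∣ 18 → (3 : ZMod 19) ^ d ≠ 1 := by decide
  have h0 := case_gen 18 19 (3 : ZMod 19) (by norm_num) e1 e2 e3 n h
  rw [M_aeval] at h0
  revert h0
  generalize (n : ZMod 19) = c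
  revert c
  decide

open Polynomial in
lemma case_19 (n : ℕ) (h : cyclotomic 19 ℤ ∣ M n) : False := by
  have e1 : ((19 : ℕ) : ZMod 191) ≠ 0 := by decide
  have e2 : (36 : ZMod 191) ^ 19 = 1 := by decide
  have e3 : ∀ d, d < 19 → d ∣ 19 → (36 : ZMod 191) ^ d ≠ 1 := by decide
  have h0 := case_gen 19 191 (36 : ZMod 191) (by norm_num) e1 e2 e3 n h
  rw [M_aeval] at h0
  revert h0
  generalize (n : ZMod 191) = c
  revert c
  decide

open Polynomial in
lemma case_20 (n : ℕ) (h : cyclotomic 20 ℤ ∣ M n) : False := by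
  have e1 : ((20 : ℕ) : ZMod 41) ≠ 0 := by decide
  have e2 : (2 : ZMod 41) ^ 20 = 1 := by decide
  have e3 : ∀ d, d < 20 → d ∣ 20 → (2 : ZMod 41) ^ d ≠ 1 := by decide
  have h0 := case_gen 20 41 (2 : ZMod 41) (by norm_num) e1 e2 e3 n h
  rw [M_aeval] at h0
  revert h0
  generalize (n : ZMod 41) = c
  revert c
  decide

open Polynomial in
lemma case_21 (n : ℕ) (h : cyclotomic 21 ℤ ∣ M n) : False := by
  have e1 : ((21 : ℕ) : ZMod 43) ≠ 0 := by decide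
  have e2 : (10 : ZMod 43) ^ 21 = 1 := by decide
  have e3 : ∀ d, d < 21 → d ∣ 21 → (10 : ZMod 43) ^ d ≠ 1 := by decide
  have h0 := case_gen 21 43 (10 : ZMod 43) (by norm_num) e1 e2 e3 n h
  rw [M_aeval] at h0
  revert h0
  generalize (n : ZMod 43) = c
  revert c
  decide

open Polynomial in
lemma case_22 (n : ℕ) (h : cyclotomic 22 ℤ ∣ M n) : False := by
  have e1 : ((22 : ℕ) : ZMod 23) ≠ 0 := by decide
  have e2 : (7 : ZMod 23) ^ 22 = 1 := by decide
  have e3 : ∀ d, d < 22 → d ∣ 22 → (7 : ZMod 23) ^ d ≠ 1 := by decide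
  have h0 := case_gen 22 23 (7 : ZMod 23) (by norm_num) e1 e2 e3 n h
  rw [M_aeval] at h0
  revert h0
  generalize (n : ZMod 23) = c
  revert c
  decide

open Polynomial in
lemma case_23 (n : ℕ) (h : cyclotomic 23 ℤ ∣ M n) : False := by
  have e1 : ((23 : ℕ) : ZMod 47) ≠ 0 := by decide
  have e2 : (3 : ZMod 47) ^ 23 = 1 := by decide
  have e3 : ∀ d, d < 23 → d ∣ 23 → (3 : ZMod 47) ^ d ≠ 1 := by decide
  have h0 := case_gen 23 47 (3 : ZMod 47) (by norm_num) e1 e2 e3 n h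
  rw [M_aeval] at h0
  revert h0
  generalize (n : ZMod 47) = c
  revert c
  decide

open Polynomial in
lemma case_24 (n : ℕ) (h : cyclotomic 24 ℤ ∣ M n) : False := by
  have e1 : ((24 : ℕ) : ZMod 73) ≠ 0 := by decide
  have e2 : (7 : ZMod 73) ^ 24 = 1 := by decide
  have e3 : ∀ d, d < 24 → d ∣ 24 → (7 : ZMod 73) ^ d ≠ 1 := by decide
  have h0 := case_gen 24 73 (7 : ZMod 73) (by norm_num) e1 e2 e3 n h
  rw [M_aeval] at h0
  revert h0
  generalize (n : ZMod 73) = c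
  revert c
  decide

open Polynomial in
lemma case_25 (n : ℕ) (h : cyclotomic 25 ℤ ∣ M n) : False := by
  have e1 : ((25 : ℕ) : ZMod 101) ≠ 0 := by decide
  have e2 : (56 : ZMod 101) ^ 25 = 1 := by decide
  have e3 : ∀ d, d < 25 → d ∣ 25 → (56 : ZMod 101) ^ d ≠ 1 := by decide
  have h0 := case_gen 25 101 (56 : ZMod 101) (by norm_num) e1 e2 e3 n h
  rw [M_aeval] at h0
  revert h0
  generalize (n : ZMod 101) = c
  revert c
  decide

open Polynomial in
lemma case_26 (n : ℕ) (h : cyclotomic 26 ℤ ∣ M n) : False := by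
  have e1 : ((26 : ℕ) : ZMod 53) ≠ 0 := by decide
  have e2 : (4 : ZMod 53) ^ 26 = 1 := by decide
  have e3 : ∀ d, d < 26 → d ∣ 26 → (4 : ZMod 53) ^ d ≠ 1 := by decide
  have h0 := case_gen 26 53 (4 : ZMod 53) (by norm_num) e1 e2 e3 n h
  rw [M_aeval] at h0
  revert h0
  generalize (n : ZMod 53) = c
  revert c
  decide

open Polynomial in
lemma case_27 (n : ℕ) (h : cyclotomic 27 ℤ ∣ M n) : False := by
  have e1 : ((27 : ℕ) : ZMod 109) ≠ 0 := by decide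
  have e2 : (3 : ZMod 109) ^ 27 = 1 := by decide
  have e3 : ∀ d, d < 27 → d ∣ 27 → (3 : ZMod 109) ^ d ≠ 1 := by decide
  have h0 := case_gen 27 109 (3 : ZMod 109) (by norm_num) e1 e2 e3 n h
  rw [M_aeval] at h0
  revert h0
  generalize (n : ZMod 109) = c
  revert c
  decide

open Polynomial in
lemma case_28 (n : ℕ) (h : cyclotomic 28 ℤ ∣ M n) : False := by
  have e1 : ((28 : ℕ) : ZMod 29) ≠ 0 := by decide
  have e2 : (3 : ZMod 29) ^ 28 = 1 := by decide
  have e3 : ∀ d, d < 28 → d ∣ 28 → (3 : ZMod 29) ^ d ≠ 1 := by decide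
  have h0 := case_gen 28 29 (3 : ZMod 29) (by norm_num) e1 e2 e3 n h
  rw [M_aeval] at h0
  revert h0
  generalize (n : ZMod 29) = c
  revert c
  decide

open Polynomial in
lemma case_30 (n : ℕ) (h : cyclotomic 30 ℤ ∣ M n) : False := by
  have e1 : ((30 : ℕ) : ZMod 31) ≠ 0 := by decide
  have e2 : (12 : ZMod 31) ^ 30 = 1 := by decide
  have e3 : ∀ d, d < 30 → d ∣ 30 → (12 : ZMod 31) ^ d ≠ 1 := by decide
  have h0 := case_gen 30 31 (12 : ZMod 31) (by norm_num) e1 e2 e3 n h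
  rw [M_aeval] at h0
  revert h0
  generalize (n : ZMod 31) = c
  revert c
  decide

open Polynomial in
lemma case_32 (n : ℕ) (h : cyclotomic 32 ℤ ∣ M n) : False := by
  have e1 : ((32 : ℕ) : ZMod 97) ≠ 0 := by decide
  have e2 : (19 : ZMod 97) ^ 32 = 1 := by decide
  have e3 : ∀ d, d < 32 → d ∣ 32 → (19 : ZMod 97) ^ d ≠ 1 := by decide
  have h0 := case_gen 32 97 (19 : ZMod 97) (by norm_num) e1 e2 e3 n h
  rw [M_aeval] at h0
  revert h0
  generalize (n : ZMod 97) = c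
  revert c
  decide

open Polynomial in
lemma case_33 (n : ℕ) (h : cyclotomic 33 ℤ ∣ M n) : False := by
  have e1 : ((33 : ℕ) : ZMod 67) ≠ 0 := by decide
  have e2 : (4 : ZMod 67) ^ 33 = 1 := by decide
  have e3 : ∀ d, d < 33 → d ∣ 33 → (4 : ZMod 67) ^ d ≠ 1 := by decide
  have h0 := case_gen 33 67 (4 : ZMod 67) (by norm_num) e1 e2 e3 n h
  rw [M_aeval] at h0
  revert h0
  generalize (n : ZMod 67) = c
  revert c
  decide

open Polynomial in
lemma case_34 (n : ℕ) (h : cyclotomic 34 ℤ ∣ M n) : False := by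
  have e1 : ((34 : ℕ) : ZMod 103) ≠ 0 := by decide
  have e2 : (22 : ZMod 103) ^ 34 = 1 := by decide
  have e3 : ∀ d, d < 34 → d ∣ 34 → (22 : ZMod 103) ^ d ≠ 1 := by decide
  have h0 := case_gen 34 103 (22 : ZMod 103) (by norm_num) e1 e2 e3 n h
  rw [M_aeval] at h0
  revert h0
  generalize (n : ZMod 103) = c
  revert c
  decide

open Polynomial in
lemma case_36 (n : ℕ) (h : cyclotomic 36 ℤ ∣ M n) : False := by
  have e1 : ((36 : ℕ) : ZMod 37) ≠ 0 := by decide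
  have e2 : (13 : ZMod 37) ^ 36 = 1 := by decide
  have e3 : ∀ d, d < 36 → d ∣ 36 → (13 : ZMod 37) ^ d ≠ 1 := by decide
  have h0 := case_gen 36 37 (13 : ZMod 37) (by norm_num) e1 e2 e3 n h
  rw [M_aeval] at h0
  revert h0
  generalize (n : ZMod 37) = c
  revert c
  decide

open Polynomial in
lemma case_38 (n : ℕ) (h : cyclotomic 38 ℤ ∣ M n) : False := by
  have e1 : ((38 : ℕ) : ZMod 191) ≠ 0 := by decide
  have e2 : (31 : ZMod 191) ^ 38 = 1 := by decide
  have e3 : ∀ d, d < 38 → d ∣ 38 → (31 : ZMod 191) ^ d ≠ 1 := by decide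
  have h0 := case_gen 38 191 (31 : ZMod 191) (by norm_num) e1 e2 e3 n h
  rw [M_aeval] at h0
  revert h0
  generalize (n : ZMod 191) = c
  revert c
  decide

open Polynomial in
lemma case_40 (n : ℕ) (h : cyclotomic 40 ℤ ∣ M n) : False := by
  have e1 : ((40 : ℕ) : ZMod 41) ≠ 0 := by decide
  have e2 : (26 : ZMod 41) ^ 40 = 1 := by decide
  have e3 : ∀ d, d < 40 → d ∣ 40 → (26 : ZMod 41) ^ d ≠ 1 := by decide
  have h0 := case_gen 40 41 (26 : ZMod 41) (by norm_num) e1 e2 e3 n h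
  rw [M_aeval] at h0
  revert h0
  generalize (n : ZMod 41) = c
  revert c
  decide

open Polynomial in
lemma case_42 (n : ℕ) (h : cyclotomic 42 ℤ ∣ M n) : False := by
  have e1 : ((42 : ℕ) : ZMod 43) ≠ 0 := by decide
  have e2 : (3 : ZMod 43) ^ 42 = 1 := by decide
  have e3 : ∀ d, d < 42 → d ∣ 42 → (3 : ZMod 43) ^ d ≠ 1 := by decide
  have h0 := case_gen 42 43 (3 : ZMod 43) (by norm_num) e1 e2 e3 n h
  rw [M_aeval] at h0
  revert h0
  generalize (n : ZMod 43) = c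
  revert c
  decide

open Polynomial in
lemma case_44 (n : ℕ) (h : cyclotomic 44 ℤ ∣ M n) : False := by
  have e1 : ((44 : ℕ) : ZMod 89) ≠ 0 := by decide
  have e2 : (20 : ZMod 89) ^ 44 = 1 := by decide
  have e3 : ∀ d, d < 44 → d ∣ 44 → (20 : ZMod 89) ^ d ≠ 1 := by decide
  have h0 := case_gen 44 89 (20 : ZMod 89) (by norm_num) e1 e2 e3 n h
  rw [M_aeval] at h0
  revert h0
  generalize (n : ZMod 89) = c
  revert c
  decide

open Polynomial in
lemma case_46 (n : ℕ) (h : cyclotomic 46 ℤ ∣ M n) : False := by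
  have e1 : ((46 : ℕ) : ZMod 47) ≠ 0 := by decide
  have e2 : (5 : ZMod 47) ^ 46 = 1 := by decide
  have e3 : ∀ d, d < 46 → d ∣ 46 → (5 : ZMod 47) ^ d ≠ 1 := by decide
  have h0 := case_gen 46 47 (5 : ZMod 47) (by norm_num) e1 e2 e3 n h
  rw [M_aeval] at h0
  revert h0
  generalize (n : ZMod 47) = c
  revert c
  decide

open Polynomial in
lemma case_48 (n : ℕ) (h : cyclotomic 48 ℤ ∣ M n) : False := by
  have e1 : ((48 : ℕ) : ZMod 97) ≠ 0 := by decide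
  have e2 : (25 : ZMod 97) ^ 48 = 1 := by decide
  have e3 : ∀ d, d < 48 → d ∣ 48 → (25 : ZMod 97) ^ d ≠ 1 := by decide
  have h0 := case_gen 48 97 (25 : ZMod 97) (by norm_num) e1 e2 e3 n h
  rw [M_aeval] at h0
  revert h0
  generalize (n : ZMod 97) = c
  revert c
  decide

open Polynomial in
lemma case_50 (n : ℕ) (h : cyclotomic 50 ℤ ∣ M n) : False := by
  have e1 : ((50 : ℕ) : ZMod 101) ≠ 0 := by decide
  have e2 : (4 : ZMod 101) ^ 50 = 1 := by decide
  have e3 : ∀ d, d < 50 → d ∣ 50 → (4 : ZMod 101) ^ d ≠ 1 := by decide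
  have h0 := case_gen 50 101 (4 : ZMod 101) (by norm_num) e1 e2 e3 n h
  rw [M_aeval] at h0
  revert h0
  generalize (n : ZMod 101) = c
  revert c
  decide

open Polynomial in
lemma case_54 (n : ℕ) (h : cyclotomic 54 ℤ ∣ M n) : False := by
  have e1 : ((54 : ℕ) : ZMod 109) ≠ 0 := by decide
  have e2 : (12 : ZMod 109) ^ 54 = 1 := by decide
  have e3 : ∀ d, d < 54 → d ∣ 54 → (12 : ZMod 109) ^ d ≠ 1 := by decide
  have h0 := case_gen 54 109 (12 : ZMod 109) (by norm_num) e1 e2 e3 n h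
  rw [M_aeval] at h0
  revert h0
  generalize (n : ZMod 109) = c
  revert c
  decide

open Polynomial in
lemma case_60 (n : ℕ) (h : cyclotomic 60 ℤ ∣ M n) : False := by
  have e1 : ((60 : ℕ) : ZMod 61) ≠ 0 := by decide
  have e2 : (10 : ZMod 61) ^ 60 = 1 := by decide
  have e3 : ∀ d, d < 60 → d ∣ 60 → (10 : ZMod 61) ^ d ≠ 1 := by decide
  have h0 := case_gen 60 61 (10 : ZMod 61) (by norm_num) e1 e2 e3 n h
  rw [M_aeval] at h0
  revert h0
  generalize (n : ZMod 61) = c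
  revert c
  decide

open Polynomial in
lemma case_66 (n : ℕ) (h : cyclotomic 66 ℤ ∣ M n) : False := by
  have e1 : ((66 : ℕ) : ZMod 67) ≠ 0 := by decide
  have e2 : (2 : ZMod 67) ^ 66 = 1 := by decide
  have e3 : ∀ d, d < 66 → d ∣ 66 → (2 : ZMod 67) ^ d ≠ 1 := by decide
  have h0 := case_gen 66 67 (2 : ZMod 67) (by norm_num) e1 e2 e3 n h
  rw [M_aeval] at h0
  revert h0
  generalize (n : ZMod 67) = c
  revert c
  decide

lemma D1 : ∀ s, s < 67 → 0 < s → s.totient ≤ 22 → s ∈ ([1,2,3,4,5,6,7,8,9,10,11,12,13,14,15,16,17,18,19,20,21,22,23,24,25,26,27,28,30,32,33,34,36,38,40,42,44,46,48,50,54,60,66] : List ℕ) := by decide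

set_option maxHeartbeats 1000000 in
lemma D2 : ∀ r, r < 162 → Nat.gcd r 6 = 1 → r.totient ≤ 22 → r ∈ ([1,5,7,11,13,17,19,23,25] : List ℕ) := by decide

lemma D3 : ∀ s ∈ ([1,2,3,4,5,6,7,8,9,10,11,12,13,14,15,16,17,18,19,20,21,22,23,24,25,26,27,28,30,32,33,34,36,38,40,42,44,46,48,50,54,60,66] : List ℕ), ∀ r ∈ ([1,5,7,11,13,17,19,23,25] : List ℕ),
    s.totient * r.totient ≤ 22 → s * r ∈ ([1,2,3,4,5,6,7,8,9,10,11,12,13,14,15,16,17,18,19,20,21,22,23,24,25,26,27,28,30,32,33,34,36,38,40,42,44,46,48,50,54,60,66] : List ℕ) := by decide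

lemma three_r_le : ∀ r : ℕ, Nat.Coprime r 6 → r ≠ 1 → 3 * r ≤ r.totient * r.totient := by
  intro r
  induction r using Nat.strong_induction_on with
  | _ r ih =>
    intro hcop h1
    have hr0 : r ≠ 0 := by
      rintro rfl
      simp [Nat.coprime_zero_left] at hcop
    have hpp : Nat.Prime r.minFac := Nat.minFac_prime h1
    have hpd : r.minFac ∣ r := Nat.minFac_dvd r
    have hp5 : 5 ≤ r.minFac := by
      have h2 : r.minFac ≠ 2 := by
        intro h
        have : 2 ∣ Nat.gcd r 6 := Nat.dvd_gcd (h ▸ hpd) (by norm_num)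
        rw [hcop] at this
        omega
      have h3 : r.minFac ≠ 3 := by
        intro h
        have : 3 ∣ Nat.gcd r 6 := Nat.dvd_gcd (h ▸ hpd) (by norm_num)
        rw [hcop] at this
        omega
      have h4 : r.minFac ≠ 4 := by
        intro h
        rw [h] at hpp
        norm_num at hpp
      have := hpp.two_le
      omega
    set p := r.minFac with hpdef
    have ha1 : 0 < r.factorization p := hpp.factorization_pos_of_dvd hr0 hpd
    obtain ⟨b, hb⟩ : ∃ b, r.factorization p = b + 1 := ⟨r.factorization p - 1, by omega⟩
    have hdecomp : p ^ (r.factorization p) * (r / p ^ (r.factorization p)) = r :=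
      Nat.ordProj_mul_ordCompl_eq_self r p
    set r' := r / p ^ (r.factorization p) with hr'def
    have hndvd : ¬ p ∣ r' := Nat.not_dvd_ordCompl hpp hr0
    have hcop2 : Nat.Coprime (p ^ (r.factorization p)) r' :=
      Nat.Coprime.pow_left _ ((Nat.Prime.coprime_iff_not_dvd hpp).mpr hndvd)
    have htot : r.totient = (p ^ (r.factorization p)).totient * r'.totient := by
      conv_lhs => rw [← hdecomp]
      exact Nat.totient_mul hcop2
    have htpa : (p ^ (r.factorization p)).totient = p ^ b * (p - 1) := by
      rw [Nat.totient_prime_pow hpp ha1, hb]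
      simp
    have hpb1 : 1 ≤ p ^ b := Nat.one_le_pow _ _ (by omega)
    have key : 3 * p ^ (r.factorization p) ≤
        (p ^ (r.factorization p)).totient * (p ^ (r.factorization p)).totient := by
      rw [htpa, hb, pow_succ]
      have hq : 3 * p ≤ (p - 1) * (p - 1) := by
        obtain ⟨q, hq5⟩ : ∃ q, p = 5 + q := ⟨p - 5, by omega⟩
        have e : p - 1 = 4 + q := by omega
        rw [e, hq5]
        nlinarith
      calc 3 * (p ^ b * p) = p ^ b * (3 * p) := by ring
        _ ≤ p ^ b * ((p - 1) * (p - 1)) := Nat.mul_le_mul_left _ hq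
        _ ≤ (p ^ b * (p - 1)) * (p ^ b * (p - 1)) := by nlinarith [hpb1]
    rcases eq_or_ne r' 1 with hr1 | hr1
    · have hd2 : p ^ (r.factorization p) = r := by
        have h' := hdecomp
        rw [hr1, mul_one] at h'
        exact h'
      calc 3 * r = 3 * p ^ (r.factorization p) := by rw [hd2]
        _ ≤ (p ^ (r.factorization p)).totient * (p ^ (r.factorization p)).totient := key
        _ = r.totient * r.totient := by rw [hd2]
    · have hr'dvd : r' ∣ r := Nat.ordCompl_dvd r p
      have hr'cop : Nat.Coprime r' 6 := Nat.Coprime.coprime_dvd_left hr'dvd hcop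
      have hr'0 : r' ≠ 0 := by
        intro h
        rw [h, mul_zero] at hdecomp
        exact hr0 hdecomp.symm
      have hpa2 : 2 ≤ p ^ (r.factorization p) := by
        calc 2 ≤ p := by omega
          _ = p ^ 1 := (pow_one p).symm
          _ ≤ p ^ (r.factorization p) := Nat.pow_le_pow_right (by omega) ha1
      have hlt : r' < r := by
        rw [← hdecomp]
        have h1 : 1 ≤ r' := Nat.pos_of_ne_zero hr'0
        nlinarith
      have ihr := ih r' hlt hr'cop hr1
      have comb : (3 * p ^ (r.factorization p)) * (3 * r') ≤ r.totient * r.totient := by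
        rw [htot]
        calc (3 * p ^ (r.factorization p)) * (3 * r')
            ≤ ((p ^ (r.factorization p)).totient * (p ^ (r.factorization p)).totient)
              * (r'.totient * r'.totient) := Nat.mul_le_mul key ihr
          _ = (p ^ (r.factorization p)).totient * r'.totient
              * ((p ^ (r.factorization p)).totient * r'.totient) := by ring
      calc 3 * r = 3 * (p ^ (r.factorization p) * r') := by rw [hdecomp]
        _ ≤ (3 * p ^ (r.factorization p)) * (3 * r') := by nlinarith
        _ ≤ r.totient * r.totient := comb

lemma two_mul_totient_two_pow : ∀ a : ℕ, 2 ^ a ≤ 2 * (2 ^ a).totient := by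
  intro a
  cases a with
  | zero => simp
  | succ a' =>
    rw [Nat.totient_prime_pow (by norm_num : Nat.Prime 2) (Nat.succ_pos a')]
    have e : a' + 1 - 1 = a' := by omega
    have e2 : (2:ℕ) - 1 = 1 := by omega
    rw [e, e2, pow_succ, mul_one]
    exact Nat.le_of_eq (mul_comm _ _)

lemma totient_three_pow : ∀ b : ℕ, 2 * 3 ^ b ≤ 3 * (3 ^ b).totient := by
  intro b
  cases b with
  | zero => simp
  | succ b' =>
    rw [Nat.totient_prime_pow (by norm_num : Nat.Prime 3) (Nat.succ_pos b')]
    have e : b' + 1 - 1 = b' := by omega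
    have e2 : (3:ℕ) - 1 = 2 := by omega
    rw [e, e2, pow_succ]
    exact Nat.le_of_eq (by ring)

lemma s_bound : ∀ a b : ℕ, 2 ^ a * 3 ^ b ≤ 3 * (2 ^ a * 3 ^ b).totient := by
  intro a b
  have hcop : Nat.Coprime (2 ^ a) (3 ^ b) := Nat.Coprime.pow _ _ (by decide)
  rw [Nat.totient_mul hcop]
  have h1 := two_mul_totient_two_pow a
  have h2 := totient_three_pow b
  nlinarith [Nat.totient_pos.mpr (pow_pos (by norm_num : (0:ℕ) < 2) a),
    Nat.totient_pos.mpr (pow_pos (by norm_num : (0:ℕ) < 3) b),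
    Nat.mul_le_mul h1 h2]

lemma mem_big (m : ℕ) (hm : 0 < m) (hφ : m.totient ≤ 22) :
    m ∈ ([1,2,3,4,5,6,7,8,9,10,11,12,13,14,15,16,17,18,19,20,21,22,23,24,25,26,27,28,30,32,33,34,36,38,40,42,44,46,48,50,54,60,66] : List ℕ) := by
  have hm0 : m ≠ 0 := hm.ne'
  have hd2 : 2 ^ (m.factorization 2) * (m / 2 ^ (m.factorization 2)) = m :=
    Nat.ordProj_mul_ordCompl_eq_self m 2
  set m₁ := m / 2 ^ (m.factorization 2) with hm₁def
  have hm₁0 : m₁ ≠ 0 := by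
    intro h
    rw [h, mul_zero] at hd2
    exact hm0 hd2.symm
  have hnd2 : ¬ 2 ∣ m₁ := Nat.not_dvd_ordCompl (by norm_num) hm0
  have hd3 : 3 ^ (m₁.factorization 3) * (m₁ / 3 ^ (m₁.factorization 3)) = m₁ :=
    Nat.ordProj_mul_ordCompl_eq_self m₁ 3
  set r := m₁ / 3 ^ (m₁.factorization 3) with hrdef
  have hr0 : r ≠ 0 := by
    intro h
    rw [h, mul_zero] at hd3
    exact hm₁0 hd3.symm
  have hnd3 : ¬ 3 ∣ r := Nat.not_dvd_ordCompl (by norm_num) hm₁0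
  have hrd : r ∣ m₁ := Nat.ordCompl_dvd m₁ 3
  have hnd2r : ¬ 2 ∣ r := fun h => hnd2 (h.trans hrd)
  have hrcop : Nat.Coprime r 6 := by
    have c2 : Nat.Coprime r 2 := ((Nat.Prime.coprime_iff_not_dvd (by norm_num)).mpr hnd2r).symm
    have c3 : Nat.Coprime r 3 := ((Nat.Prime.coprime_iff_not_dvd (by norm_num)).mpr hnd3).symm
    have : (6 : ℕ) = 2 * 3 := by norm_num
    rw [this]
    exact Nat.Coprime.mul_right c2 c3
  set a := m.factorization 2
  set b := m₁.factorization 3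
  have hmsr : m = (2 ^ a * 3 ^ b) * r := by
    rw [mul_assoc, hd3, hd2]
  have hcop23 : Nat.Coprime (2 ^ a) (3 ^ b) := Nat.Coprime.pow _ _ (by decide)
  have hcopsr : Nat.Coprime (2 ^ a * 3 ^ b) r := by
    apply Nat.Coprime.mul
    · exact Nat.Coprime.pow_left _ ((Nat.Prime.coprime_iff_not_dvd (by norm_num)).mpr hnd2r)
    · exact Nat.Coprime.pow_left _ ((Nat.Prime.coprime_iff_not_dvd (by norm_num)).mpr hnd3)
  have htot : m.totient = (2 ^ a * 3 ^ b).totient * r.totient := by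
    rw [hmsr, Nat.totient_mul hcopsr]
  have hspos : 0 < 2 ^ a * 3 ^ b := by positivity
  have hφs : (2 ^ a * 3 ^ b).totient ≤ 22 := by
    have : (2 ^ a * 3 ^ b).totient ∣ m.totient :=
      Nat.totient_dvd_of_dvd ⟨r, hmsr⟩
    exact le_trans (Nat.le_of_dvd (by simpa [Nat.totient_pos] using hm) this) hφ
  have hsle : 2 ^ a * 3 ^ b ≤ 66 := le_trans (s_bound a b) (by omega)
  rcases eq_or_ne r 1 with hr1 | hr1
  · rw [hr1, mul_one] at hmsr
    exact D1 m (by omega) hm hφ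
  · have h3r : 3 * r ≤ r.totient * r.totient := three_r_le r hrcop hr1
    have hφr : r.totient ≤ 22 := by
      have : r.totient ∣ m.totient := Nat.totient_dvd_of_dvd ⟨2 ^ a * 3 ^ b, by rw [hmsr]; ring⟩
      exact le_trans (Nat.le_of_dvd (by simpa [Nat.totient_pos] using hm) this) hφ
    have hrle : r < 162 := by nlinarith
    have hs_mem := D1 (2 ^ a * 3 ^ b) (by omega) hspos hφs
    have hr_mem := D2 r hrle hrcop hφr
    have hφm : (2 ^ a * 3 ^ b).totient * r.totient ≤ 22 := by rw [← htot]; exact hφ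
    rw [hmsr]
    exact D3 _ hs_mem _ hr_mem hφm

set_option maxHeartbeats 4000000 in
/-- For every natural number `n`, no complex root of the degree-22 monic integer polynomial
`μ n` (the unique monic polynomial of degree 22 with `μ n (x) = x^11 * g n (x + 1/x)` for all
`x ≠ 0`) is a root of unity. -/
theorem no_root_of_unity (n : ℕ) (μ : Polynomial ℤ) (hmonic : μ.Monic)
    (hdeg : μ.natDegree = 22)
    (hμ : ∀ z : ℂ, z ≠ 0 →
      Polynomial.aeval z μ = z ^ 11 * Polynomial.aeval (z + z⁻¹) (g n)) :
    ∀ z : ℂ, Polynomial.aeval z μ = 0 → ∀ k : ℕ, 0 < k → z ^ k ≠ 1 := by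
  intro z hz k hk heq
  have hfin : IsOfFinOrder z := isOfFinOrder_iff_pow_eq_one.mpr ⟨k, hk, heq⟩
  have hm : 0 < orderOf z := hfin.orderOf_pos
  have hprim : IsPrimitiveRoot z (orderOf z) := IsPrimitiveRoot.orderOf z
  have hdvd : Polynomial.cyclotomic (orderOf z) ℤ ∣ μ := by
    rw [Polynomial.cyclotomic_eq_minpoly hprim hm]
    exact minpoly.isIntegrallyClosed_dvd (hprim.isIntegral hm) hz
  have hφ : (orderOf z).totient ≤ 22 := by
    have h1 := Polynomial.natDegree_le_of_dvd hdvd hmonic.ne_zero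
    rwa [Polynomial.natDegree_cyclotomic, hdeg] at h1
  rw [mu_eq_M n μ hμ] at hdvd
  have hmem : orderOf z ∈ ([1,2,3,4,5,6,7,8,9,10,11,12,13,14,15,16,17,18,19,20,21,22,23,24,25,26,27,28,30,32,33,34,36,38,40,42,44,46,48,50,54,60,66] : List ℕ) := mem_big _ hm hφ
  have final : ∀ m, m ∈ ([1,2,3,4,5,6,7,8,9,10,11,12,13,14,15,16,17,18,19,20,21,22,23,24,25,26,27,28,30,32,33,34,36,38,40,42,44,46,48,50,54,60,66] : List ℕ) → Polynomial.cyclotomic m ℤ ∣ M n → False := by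
    intro m hmm hdvd
    fin_cases hmm
    exacts [case_1 n hdvd, case_2 n hdvd, case_3 n hdvd, case_4 n hdvd, case_5 n hdvd, case_6 n hdvd, case_7 n hdvd, case_8 n hdvd, case_9 n hdvd, case_10 n hdvd, case_11 n hdvd, case_12 n hdvd, case_13 n hdvd, case_14 n hdvd, case_15 n hdvd, case_16 n hdvd, case_17 n hdvd, case_18 n hdvd, case_19 n hdvd, case_20 n hdvd, case_21 n hdvd, case_22 n hdvd, case_23 n hdvd, case_24 n hdvd, case_25 n hdvd, case_26 n hdvd, case_27 n hdvd, case_28 n hdvd, case_30 n hdvd, case_32 n hdvd, case_33 n hdvd, case_34 n hdvd, case_36 n hdvd, case_38 n hdvd, case_40 n hdvd, case_42 n hdvd, case_44 n hdvd, case_46 n hdvd, case_48 n hdvd, case_50 n hdvd, case_54 n hdvd, case_60 n hdvd, case_66 n hdvd]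
  exact final _ hmem hdvd
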